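/- Let δ ∈ (0,1] and let m be an integer with m ≥ 36/δ. Let (E,V) be a partition datum on {1,…,3m} with δ(E,V) ≥ δ, and define N3 and G with parameter δ. Then the sum, over all tuples (i, i', (j1,j2,j3), (j'1,j'2)) ∈ {1,…,m}^2 × {1,…,2m+1}^3 × {1,…,2m+1}^2 such that i ∈ G, i' ∈ G, (j1,j2,j3) ∈ N3(i) and (j2, j'1, j'2) ∈ N3(i'), of |E_i[V_{j1} ∩ V_{j2} ∩ V_{j3}] ∩ E_{i'}[V_{j'1} ∩ V_{j'2}]| / C(3m,2), is at least (δ(E,V)/2) · m^2 · (2m+1)^5. -/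

import Mathlib

open scoped Classical

/-- The density `δ(E,V)` of a partition datum on `{1,…,3m}`: `1/(m²(2m+1)⁵C(3m,2))` times
the sum over `(i₁,i₂) ∈ [m]²` and `(j₁,…,j₅) ∈ [2m+1]⁵` of
`|⋂_{k=1}^5 E_{i₁}[V_{j_k}] ∩ E_{i₂}[V_{j_k}]|`, where `E[W] = {e ∈ E : e ⊆ W}`. -/
noncomputable def density (m : ℕ) (E : Fin m → Finset (Finset (Fin (3 * m))))
    (V : Fin (2 * m + 1) → Finset (Fin (3 * m))) : ℝ :=
  (∑ i : Fin m × Fin m, ∑ j : Fin 5 → Fin (2 * m + 1),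
      ((Finset.univ.inf fun k : Fin 5 =>
        ((E i.1).filter fun e => e ⊆ V (j k)) ∩
        ((E i.2).filter fun e => e ⊆ V (j k))).card : ℝ)) /
    ((m : ℝ) ^ 2 * (2 * (m : ℝ) + 1) ^ 5 * ((3 * m).choose 2 : ℝ))

/-- `N3(i)`: the triples `(j₁,j₂,j₃)` of pairwise distinct indices with
`|E_i[V_{j₁} ∩ V_{j₂} ∩ V_{j₃}]| ≥ (δ/3)·C(3m,2)`. -/
noncomputable def N3 (m : ℕ) (E : Fin m → Finset (Finset (Fin (3 * m))))
    (V : Fin (2 * m + 1) → Finset (Fin (3 * m))) (δ : ℝ) (i : Fin m) :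
    Finset (Fin (2 * m + 1) × Fin (2 * m + 1) × Fin (2 * m + 1)) :=
  Finset.univ.filter fun j =>
    j.1 ≠ j.2.1 ∧ j.2.1 ≠ j.2.2 ∧ j.1 ≠ j.2.2 ∧
      (δ / 3) * ((3 * m).choose 2 : ℝ) ≤
        (((E i).filter fun e => e ⊆ V j.1 ∩ V j.2.1 ∩ V j.2.2).card : ℝ)

/-- `G`: the set of `i ∈ [m]` with `|N3(i)| ≥ (δ/12)·(2m+1)³`. -/
noncomputable def Gset (m : ℕ) (E : Fin m → Finset (Finset (Fin (3 * m))))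
    (V : Fin (2 * m + 1) → Finset (Fin (3 * m))) (δ : ℝ) : Finset (Fin m) :=
  Finset.univ.filter fun i => (δ / 12) * (2 * (m : ℝ) + 1) ^ 3 ≤ ((N3 m E V δ i).card : ℝ)

-- ==== auxiliary material ====

def tupEquiv (J : Type*) : ((J × J × J) × (J × J)) ≃ (Fin 5 → J) where
  toFun x := ![x.1.1, x.1.2.1, x.1.2.2, x.2.1, x.2.2]
  invFun f := ((f 0, f 1, f 2), (f 3, f 4))
  left_inv := fun ⟨⟨a,b,c⟩,d,e⟩ => rfl
  right_inv := fun f => by funext k; fin_cases k <;> rfl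

lemma card_le_choose {N : ℕ} (A : Finset (Finset (Fin N))) (hA : ∀ e ∈ A, e.card = 2) :
    A.card ≤ N.choose 2 := by
  have h : A ⊆ Finset.powersetCard 2 Finset.univ := fun e he =>
    Finset.mem_powersetCard.2 ⟨Finset.subset_univ e, hA e he⟩
  calc A.card ≤ _ := Finset.card_le_card h
    _ = N.choose 2 := by rw [Finset.card_powersetCard, Finset.card_univ, Fintype.card_fin]

abbrev TUP (m : ℕ) :=
  (Fin m × Fin m) × (Fin (2 * m + 1) × Fin (2 * m + 1) × Fin (2 * m + 1)) ×
    (Fin (2 * m + 1) × Fin (2 * m + 1))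

section aux
variable (m : ℕ) (E : Fin m → Finset (Finset (Fin (3 * m))))
  (V : Fin (2 * m + 1) → Finset (Fin (3 * m))) (δ : ℝ)

noncomputable def Tc (x : TUP m) : ℝ :=
  ((((E x.1.1).filter fun e => e ⊆ V x.2.1.1 ∩ V x.2.1.2.1 ∩ V x.2.1.2.2) ∩
    ((E x.1.2).filter fun e => e ⊆ V x.2.2.1 ∩ V x.2.2.2)).card : ℝ)

def goodP (x : TUP m) : Prop :=
  x.1.1 ∈ Gset m E V δ ∧ x.1.2 ∈ Gset m E V δ ∧
    x.2.1 ∈ N3 m E V δ x.1.1 ∧ (x.2.1.2.1, x.2.2.1, x.2.2.2) ∈ N3 m E V δ x.1.2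

def dis (x : TUP m) : Prop :=
  (x.2.1.1 ≠ x.2.1.2.1 ∧ x.2.1.2.1 ≠ x.2.1.2.2 ∧ x.2.1.1 ≠ x.2.1.2.2) ∧
  (x.2.1.2.1 ≠ x.2.2.1 ∧ x.2.2.1 ≠ x.2.2.2 ∧ x.2.1.2.1 ≠ x.2.2.2)

def q1P (x : TUP m) : Prop :=
  dis m x ∧ (x.2.1 ∉ N3 m E V δ x.1.1 ∨ (x.2.1.2.1, x.2.2.1, x.2.2.2) ∉ N3 m E V δ x.1.2)

def q2P (x : TUP m) : Prop := ¬ dis m x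

def q3P (x : TUP m) : Prop :=
  x.2.1 ∈ N3 m E V δ x.1.1 ∧ (x.2.1.2.1, x.2.2.1, x.2.2.2) ∈ N3 m E V δ x.1.2 ∧
    (x.1.1 ∉ Gset m E V δ ∨ x.1.2 ∉ Gset m E V δ)

lemma inf_eq (i1 i2 : Fin m) (a b c d e : Fin (2*m+1)) :
    (Finset.univ.inf fun k : Fin 5 =>
        ((E i1).filter fun f => f ⊆ V (![a,b,c,d,e] k)) ∩
        ((E i2).filter fun f => f ⊆ V (![a,b,c,d,e] k)))
    = ((E i1).filter fun f => f ⊆ V a ∩ V b ∩ V c) ∩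
      ((E i2).filter fun f => f ⊆ V d ∩ V e) := by
  ext f
  simp only [Finset.mem_inf, Finset.mem_univ, forall_true_left, Fin.forall_fin_succ,
    Matrix.cons_val_zero, Matrix.cons_val_succ, Finset.mem_inter, Finset.mem_filter,
    Finset.subset_inter_iff, IsEmpty.forall_iff, and_true]
  tauto

lemma sum_univ_Tc (hne : ((m:ℝ)^2*(2*(m:ℝ)+1)^5*((3*m).choose 2 : ℝ)) ≠ 0) :
    ∑ x : TUP m, Tc m E V x
      = density m E V * ((m:ℝ)^2*(2*(m:ℝ)+1)^5*((3*m).choose 2 : ℝ)) := by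
  rw [density, div_mul_cancel₀ _ hne, Fintype.sum_prod_type]
  refine Finset.sum_congr rfl fun p _ => ?_
  rw [← Equiv.sum_comp (tupEquiv (Fin (2*m+1)))
    (fun j => ((Finset.univ.inf fun k : Fin 5 =>
        ((E p.1).filter fun e => e ⊆ V (j k)) ∩
        ((E p.2).filter fun e => e ⊆ V (j k))).card : ℝ))]
  refine Finset.sum_congr rfl fun y _ => ?_
  obtain ⟨⟨a,b,c⟩,d,e⟩ := y
  simp only [Tc, tupEquiv, Equiv.coe_fn_mk]
  exact congrArg (fun s => ((Finset.card s : ℕ) : ℝ)) (inf_eq m E V p.1 p.2 a b c d e).symm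


lemma Tc_le_C (hE2 : ∀ i, ∀ e ∈ E i, e.card = 2) (x : TUP m) :
    Tc m E V x ≤ (((3 * m).choose 2 : ℕ) : ℝ) := by
  have h := card_le_choose
    (A := (((E x.1.1).filter fun e => e ⊆ V x.2.1.1 ∩ V x.2.1.2.1 ∩ V x.2.1.2.2) ∩
      ((E x.1.2).filter fun e => e ⊆ V x.2.2.1 ∩ V x.2.2.2)))
    (fun e he => hE2 x.1.1 e (Finset.mem_filter.1 (Finset.mem_inter.1 he).1).1)
  simp only [Tc]
  exact_mod_cast h

lemma Tc_le_left (x : TUP m) :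
    Tc m E V x ≤ (((E x.1.1).filter fun e =>
      e ⊆ V x.2.1.1 ∩ V x.2.1.2.1 ∩ V x.2.1.2.2).card : ℝ) := by
  simp only [Tc]
  exact Nat.cast_le.2 (Finset.card_le_card Finset.inter_subset_left)

lemma Tc_le_right (x : TUP m) :
    Tc m E V x ≤ (((E x.1.2).filter fun e =>
      e ⊆ V x.2.1.2.1 ∩ V x.2.2.1 ∩ V x.2.2.2).card : ℝ) := by
  simp only [Tc]
  refine Nat.cast_le.2 (Finset.card_le_card ?_)
  intro f hf
  simp only [Finset.mem_inter, Finset.mem_filter, Finset.subset_inter_iff] at hf ⊢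
  tauto

lemma pointwise_bound (hδ0 : 0 < δ) (hE2 : ∀ i, ∀ e ∈ E i, e.card = 2) (x : TUP m)
    (hx : ¬ goodP m E V δ x) :
    Tc m E V x ≤
      (if q1P m E V δ x then δ/3 * (((3 * m).choose 2 : ℕ) : ℝ) else 0) +
      (if q2P m x then (((3 * m).choose 2 : ℕ) : ℝ) else 0) +
      (if q3P m E V δ x then (((3 * m).choose 2 : ℕ) : ℝ) else 0) := by
  have hC : (0:ℝ) ≤ (((3 * m).choose 2 : ℕ) : ℝ) := Nat.cast_nonneg _
  have hdC : (0:ℝ) ≤ δ/3 * (((3 * m).choose 2 : ℕ) : ℝ) :=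
    mul_nonneg (by linarith) hC
  have h1 : (0:ℝ) ≤ (if q1P m E V δ x then δ/3 * (((3 * m).choose 2 : ℕ) : ℝ) else 0) := by
    split_ifs <;> linarith
  have h2 : (0:ℝ) ≤ (if q2P m x then (((3 * m).choose 2 : ℕ) : ℝ) else 0) := by
    split_ifs <;> linarith
  have h3 : (0:ℝ) ≤ (if q3P m E V δ x then (((3 * m).choose 2 : ℕ) : ℝ) else 0) := by
    split_ifs <;> linarith
  by_cases hd : dis m x
  · by_cases hmem : x.2.1 ∈ N3 m E V δ x.1.1 ∧
        (x.2.1.2.1, x.2.2.1, x.2.2.2) ∈ N3 m E V δ x.1.2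
    · have hq3 : q3P m E V δ x := by
        refine ⟨hmem.1, hmem.2, ?_⟩
        by_contra hcon
        push_neg at hcon
        exact hx ⟨hcon.1, hcon.2, hmem.1, hmem.2⟩
      rw [if_pos hq3, if_neg (show ¬ q1P m E V δ x from fun h =>
        h.2.elim (fun h' => h' hmem.1) (fun h' => h' hmem.2)),
        if_neg (show ¬ q2P m x from not_not_intro hd)]
      linarith [Tc_le_C m E V hE2 x]
    · have hq1 : q1P m E V δ x := ⟨hd, by tauto⟩
      rw [if_pos hq1, if_neg (show ¬ q2P m x from not_not_intro hd)]
      have hsmall : Tc m E V x ≤ δ/3 * (((3 * m).choose 2 : ℕ) : ℝ) := by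
        rcases not_and_or.1 hmem with h | h
        · have hlt : (((E x.1.1).filter fun e =>
              e ⊆ V x.2.1.1 ∩ V x.2.1.2.1 ∩ V x.2.1.2.2).card : ℝ) <
              δ/3 * (((3 * m).choose 2 : ℕ) : ℝ) := by
            by_contra hge
            push_neg at hge
            exact h (by
              simp only [N3, Finset.mem_filter, Finset.mem_univ, true_and]
              exact ⟨hd.1.1, hd.1.2.1, hd.1.2.2, hge⟩)
          linarith [Tc_le_left m E V x]
        · have hlt : (((E x.1.2).filter fun e =>
              e ⊆ V x.2.1.2.1 ∩ V x.2.2.1 ∩ V x.2.2.2).card : ℝ) <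
              δ/3 * (((3 * m).choose 2 : ℕ) : ℝ) := by
            by_contra hge
            push_neg at hge
            exact h (by
              simp only [N3, Finset.mem_filter, Finset.mem_univ, true_and]
              exact ⟨hd.2.1, hd.2.2.1, hd.2.2.2, hge⟩)
          linarith [Tc_le_right m E V x]
      linarith
  · rw [if_pos (show q2P m x from hd)]
    linarith [Tc_le_C m E V hE2 x]


lemma S1_bound (hδ0 : 0 < δ) :
    ∑ x : TUP m, (if q1P m E V δ x then δ/3 * (((3 * m).choose 2 : ℕ) : ℝ) else 0) ≤
      δ/3 * ((m:ℝ)^2 * (2*(m:ℝ)+1)^5) * (((3 * m).choose 2 : ℕ) : ℝ) := by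
  have hC : (0:ℝ) ≤ (((3 * m).choose 2 : ℕ) : ℝ) := Nat.cast_nonneg _
  have hdC : (0:ℝ) ≤ δ/3 * (((3 * m).choose 2 : ℕ) : ℝ) := mul_nonneg (by linarith) hC
  calc ∑ x : TUP m, (if q1P m E V δ x then δ/3 * (((3 * m).choose 2 : ℕ) : ℝ) else 0)
      ≤ ∑ _x : TUP m, δ/3 * (((3 * m).choose 2 : ℕ) : ℝ) :=
        Finset.sum_le_sum fun x _ => by split_ifs <;> linarith
    _ = (Fintype.card (TUP m) : ℝ) * (δ/3 * (((3 * m).choose 2 : ℕ) : ℝ)) := by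
        rw [Finset.sum_const, Finset.card_univ, nsmul_eq_mul]
    _ = δ/3 * ((m:ℝ)^2 * (2*(m:ℝ)+1)^5) * (((3 * m).choose 2 : ℕ) : ℝ) := by
        simp only [Fintype.card_prod, Fintype.card_fin]
        push_cast
        ring

lemma card_filter_le_univ_target {α β : Type*} [Fintype α] [Fintype β]
    (p : α → Prop) [DecidablePred p] (f : α → β)
    (hf : Set.InjOn f (Finset.univ.filter p)) :
    (Finset.univ.filter p).card ≤ Fintype.card β := by
  rw [← Finset.card_univ]
  exact Finset.card_le_card_of_injOn f (fun a _ => Finset.mem_univ _) hf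

lemma S2_count :
    ((Finset.univ.filter (q2P m)).card : ℝ) ≤ 6 * ((m:ℝ)^2 * (2*(m:ℝ)+1)^4) := by
  classical
  have hsub : Finset.univ.filter (q2P m) ⊆ (Finset.univ.filter (fun x : TUP m => x.2.1.1 = x.2.1.2.1)) ∪ (Finset.univ.filter (fun x : TUP m => x.2.1.2.1 = x.2.1.2.2)) ∪ (Finset.univ.filter (fun x : TUP m => x.2.1.1 = x.2.1.2.2)) ∪ (Finset.univ.filter (fun x : TUP m => x.2.1.2.1 = x.2.2.1)) ∪ (Finset.univ.filter (fun x : TUP m => x.2.2.1 = x.2.2.2)) ∪ (Finset.univ.filter (fun x : TUP m => x.2.1.2.1 = x.2.2.2)) := by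
    intro x hx
    simp only [Finset.mem_filter, Finset.mem_union, Finset.mem_univ,
      true_and, q2P, dis] at hx ⊢
    tauto
  have hB : Fintype.card (Fin m × Fin m × Fin (2*m+1) × Fin (2*m+1) × Fin (2*m+1) × Fin (2*m+1)) = m * m * (2*m+1)^4 := by
    simp only [Fintype.card_prod, Fintype.card_fin]
    ring
  have h1 : (Finset.univ.filter (fun x : TUP m => x.2.1.1 = x.2.1.2.1)).card ≤ m * m * (2*m+1)^4 := by
    rw [← hB]
    apply card_filter_le_univ_target _ (fun x : TUP m => (x.1.1, x.1.2, x.2.1.2.1, x.2.1.2.2, x.2.2.1, x.2.2.2))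
    intro x hx y hy hxy
    simp only [Finset.mem_coe, Finset.mem_filter] at hx hy
    obtain ⟨⟨i1,i2⟩,⟨⟨a,b,c⟩,d,e⟩⟩ := x
    obtain ⟨⟨i1',i2'⟩,⟨⟨a',b',c'⟩,d',e'⟩⟩ := y
    simp_all [Prod.ext_iff]
  have h2 : (Finset.univ.filter (fun x : TUP m => x.2.1.2.1 = x.2.1.2.2)).card ≤ m * m * (2*m+1)^4 := by
    rw [← hB]
    apply card_filter_le_univ_target _ (fun x : TUP m => (x.1.1, x.1.2, x.2.1.1, x.2.1.2.1, x.2.2.1, x.2.2.2))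
    intro x hx y hy hxy
    simp only [Finset.mem_coe, Finset.mem_filter] at hx hy
    obtain ⟨⟨i1,i2⟩,⟨⟨a,b,c⟩,d,e⟩⟩ := x
    obtain ⟨⟨i1',i2'⟩,⟨⟨a',b',c'⟩,d',e'⟩⟩ := y
    simp_all [Prod.ext_iff]
  have h3 : (Finset.univ.filter (fun x : TUP m => x.2.1.1 = x.2.1.2.2)).card ≤ m * m * (2*m+1)^4 := by
    rw [← hB]
    apply card_filter_le_univ_target _ (fun x : TUP m => (x.1.1, x.1.2, x.2.1.1, x.2.1.2.1, x.2.2.1, x.2.2.2))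
    intro x hx y hy hxy
    simp only [Finset.mem_coe, Finset.mem_filter] at hx hy
    obtain ⟨⟨i1,i2⟩,⟨⟨a,b,c⟩,d,e⟩⟩ := x
    obtain ⟨⟨i1',i2'⟩,⟨⟨a',b',c'⟩,d',e'⟩⟩ := y
    simp_all [Prod.ext_iff]
  have h4 : (Finset.univ.filter (fun x : TUP m => x.2.1.2.1 = x.2.2.1)).card ≤ m * m * (2*m+1)^4 := by
    rw [← hB]
    apply card_filter_le_univ_target _ (fun x : TUP m => (x.1.1, x.1.2, x.2.1.1, x.2.1.2.1, x.2.1.2.2, x.2.2.2))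
    intro x hx y hy hxy
    simp only [Finset.mem_coe, Finset.mem_filter] at hx hy
    obtain ⟨⟨i1,i2⟩,⟨⟨a,b,c⟩,d,e⟩⟩ := x
    obtain ⟨⟨i1',i2'⟩,⟨⟨a',b',c'⟩,d',e'⟩⟩ := y
    simp_all [Prod.ext_iff]
  have h5 : (Finset.univ.filter (fun x : TUP m => x.2.2.1 = x.2.2.2)).card ≤ m * m * (2*m+1)^4 := by
    rw [← hB]
    apply card_filter_le_univ_target _ (fun x : TUP m => (x.1.1, x.1.2, x.2.1.1, x.2.1.2.1, x.2.1.2.2, x.2.2.1))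
    intro x hx y hy hxy
    simp only [Finset.mem_coe, Finset.mem_filter] at hx hy
    obtain ⟨⟨i1,i2⟩,⟨⟨a,b,c⟩,d,e⟩⟩ := x
    obtain ⟨⟨i1',i2'⟩,⟨⟨a',b',c'⟩,d',e'⟩⟩ := y
    simp_all [Prod.ext_iff]
  have h6 : (Finset.univ.filter (fun x : TUP m => x.2.1.2.1 = x.2.2.2)).card ≤ m * m * (2*m+1)^4 := by
    rw [← hB]
    apply card_filter_le_univ_target _ (fun x : TUP m => (x.1.1, x.1.2, x.2.1.1, x.2.1.2.1, x.2.1.2.2, x.2.2.1))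
    intro x hx y hy hxy
    simp only [Finset.mem_coe, Finset.mem_filter] at hx hy
    obtain ⟨⟨i1,i2⟩,⟨⟨a,b,c⟩,d,e⟩⟩ := x
    obtain ⟨⟨i1',i2'⟩,⟨⟨a',b',c'⟩,d',e'⟩⟩ := y
    simp_all [Prod.ext_iff]
  have hcard : (Finset.univ.filter (q2P m)).card ≤ 6 * (m * m * (2*m+1)^4) := by
    have hc := Finset.card_le_card hsub
    have u1 := Finset.card_union_le ((Finset.univ.filter (fun x : TUP m => x.2.1.1 = x.2.1.2.1)) ∪ (Finset.univ.filter (fun x : TUP m => x.2.1.2.1 = x.2.1.2.2)) ∪ (Finset.univ.filter (fun x : TUP m => x.2.1.1 = x.2.1.2.2)) ∪ (Finset.univ.filter (fun x : TUP m => x.2.1.2.1 = x.2.2.1)) ∪ (Finset.univ.filter (fun x : TUP m => x.2.2.1 = x.2.2.2))) (Finset.univ.filter (fun x : TUP m => x.2.1.2.1 = x.2.2.2))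
    have u2 := Finset.card_union_le ((Finset.univ.filter (fun x : TUP m => x.2.1.1 = x.2.1.2.1)) ∪ (Finset.univ.filter (fun x : TUP m => x.2.1.2.1 = x.2.1.2.2)) ∪ (Finset.univ.filter (fun x : TUP m => x.2.1.1 = x.2.1.2.2)) ∪ (Finset.univ.filter (fun x : TUP m => x.2.1.2.1 = x.2.2.1))) (Finset.univ.filter (fun x : TUP m => x.2.2.1 = x.2.2.2))
    have u3 := Finset.card_union_le ((Finset.univ.filter (fun x : TUP m => x.2.1.1 = x.2.1.2.1)) ∪ (Finset.univ.filter (fun x : TUP m => x.2.1.2.1 = x.2.1.2.2)) ∪ (Finset.univ.filter (fun x : TUP m => x.2.1.1 = x.2.1.2.2))) (Finset.univ.filter (fun x : TUP m => x.2.1.2.1 = x.2.2.1))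
    have u4 := Finset.card_union_le ((Finset.univ.filter (fun x : TUP m => x.2.1.1 = x.2.1.2.1)) ∪ (Finset.univ.filter (fun x : TUP m => x.2.1.2.1 = x.2.1.2.2))) (Finset.univ.filter (fun x : TUP m => x.2.1.1 = x.2.1.2.2))
    have u5 := Finset.card_union_le (Finset.univ.filter (fun x : TUP m => x.2.1.1 = x.2.1.2.1)) (Finset.univ.filter (fun x : TUP m => x.2.1.2.1 = x.2.1.2.2))
    omega
  calc ((Finset.univ.filter (q2P m)).card : ℝ) ≤ ((6 * (m * m * (2*m+1)^4) : ℕ) : ℝ) := by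
        exact_mod_cast hcard
    _ = 6 * ((m:ℝ)^2 * (2*(m:ℝ)+1)^4) := by push_cast; ring


lemma S3_bound (hδ0 : 0 < δ) :
    ∑ x : TUP m, (if q3P m E V δ x then (((3 * m).choose 2 : ℕ) : ℝ) else 0) ≤
      δ/12 * ((m:ℝ)^2 * (2*(m:ℝ)+1)^5) * (((3 * m).choose 2 : ℕ) : ℝ) := by
  classical
  have hC : (0:ℝ) ≤ (((3 * m).choose 2 : ℕ) : ℝ) := Nat.cast_nonneg _
  have hbnd : (0:ℝ) ≤ δ/12 * (2*(m:ℝ)+1)^5 * (((3 * m).choose 2 : ℕ) : ℝ) :=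
    mul_nonneg (mul_nonneg (by linarith) (by positivity)) hC
  rw [Fintype.sum_prod_type]
  have hinner : ∀ p : Fin m × Fin m,
      (∑ y : (Fin (2*m+1) × Fin (2*m+1) × Fin (2*m+1)) × (Fin (2*m+1) × Fin (2*m+1)),
        (if q3P m E V δ (p, y) then (((3 * m).choose 2 : ℕ) : ℝ) else 0)) ≤
        δ/12 * (2*(m:ℝ)+1)^5 * (((3 * m).choose 2 : ℕ) : ℝ) := by
    intro p
    by_cases hp1 : p.1 ∈ Gset m E V δ
    · by_cases hp2 : p.2 ∈ Gset m E V δ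
      · have hz : ∀ y : (Fin (2*m+1) × Fin (2*m+1) × Fin (2*m+1)) × (Fin (2*m+1) × Fin (2*m+1)),
            (if q3P m E V δ (p, y) then (((3 * m).choose 2 : ℕ) : ℝ) else 0) = 0 := fun y =>
          if_neg (fun hq => hq.2.2.elim (fun h => h hp1) (fun h => h hp2))
        calc _ = ∑ _y : (Fin (2*m+1) × Fin (2*m+1) × Fin (2*m+1)) × (Fin (2*m+1) × Fin (2*m+1)), (0:ℝ) :=
              Finset.sum_congr rfl (fun y _ => hz y)
          _ = 0 := Finset.sum_const_zero
          _ ≤ _ := hbnd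
      · have hlt : ((N3 m E V δ p.2).card : ℝ) < δ/12 * (2*(m:ℝ)+1)^3 := by
          simp only [Gset, Finset.mem_filter, Finset.mem_univ, true_and, not_le] at hp2
          exact hp2
        have hcount : (Finset.univ.filter (fun y : (Fin (2*m+1) × Fin (2*m+1) × Fin (2*m+1)) × (Fin (2*m+1) × Fin (2*m+1)) =>
            (y.1.2.1, y.2.1, y.2.2) ∈ N3 m E V δ p.2)).card ≤
            (N3 m E V δ p.2).card * ((2*m+1) * (2*m+1)) := by
          have hle := Finset.card_le_card_of_injOn
            (s := Finset.univ.filter (fun y : (Fin (2*m+1) × Fin (2*m+1) × Fin (2*m+1)) × (Fin (2*m+1) × Fin (2*m+1)) =>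
              (y.1.2.1, y.2.1, y.2.2) ∈ N3 m E V δ p.2))
            (f := fun y : (Fin (2*m+1) × Fin (2*m+1) × Fin (2*m+1)) × (Fin (2*m+1) × Fin (2*m+1)) =>
              ((y.1.2.1, y.2.1, y.2.2), (y.1.1, y.1.2.2)))
            (t := (N3 m E V δ p.2) ×ˢ (Finset.univ : Finset (Fin (2*m+1) × Fin (2*m+1))))
            (fun y hy => Finset.mem_product.2 ⟨(Finset.mem_filter.1 hy).2, Finset.mem_univ _⟩)
            (by
              intro x hx y hy hxy
              obtain ⟨⟨a,b,c⟩,d,e⟩ := x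
              obtain ⟨⟨a',b',c'⟩,d',e'⟩ := y
              simp_all [Prod.ext_iff])
          calc _ ≤ _ := hle
            _ = (N3 m E V δ p.2).card * ((2*m+1) * (2*m+1)) := by
              rw [Finset.card_product, Finset.card_univ]
              simp [Fintype.card_prod, Fintype.card_fin]
        calc (∑ y : (Fin (2*m+1) × Fin (2*m+1) × Fin (2*m+1)) × (Fin (2*m+1) × Fin (2*m+1)),
              (if q3P m E V δ (p, y) then (((3 * m).choose 2 : ℕ) : ℝ) else 0))
            ≤ ∑ y : (Fin (2*m+1) × Fin (2*m+1) × Fin (2*m+1)) × (Fin (2*m+1) × Fin (2*m+1)),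
              (if (y.1.2.1, y.2.1, y.2.2) ∈ N3 m E V δ p.2 then (((3 * m).choose 2 : ℕ) : ℝ) else 0) := by
              refine Finset.sum_le_sum fun y _ => ?_
              by_cases hq : q3P m E V δ (p, y)
              · rw [if_pos hq, if_pos hq.2.1]
              · rw [if_neg hq]; split_ifs <;> linarith
          _ = ((Finset.univ.filter (fun y : (Fin (2*m+1) × Fin (2*m+1) × Fin (2*m+1)) × (Fin (2*m+1) × Fin (2*m+1)) =>
                (y.1.2.1, y.2.1, y.2.2) ∈ N3 m E V δ p.2)).card : ℝ) * (((3 * m).choose 2 : ℕ) : ℝ) := by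
              rw [← Finset.sum_filter, Finset.sum_const, nsmul_eq_mul]
          _ ≤ (((N3 m E V δ p.2).card * ((2*m+1) * (2*m+1)) : ℕ) : ℝ) * (((3 * m).choose 2 : ℕ) : ℝ) :=
              mul_le_mul_of_nonneg_right (Nat.cast_le.2 hcount) hC
          _ ≤ δ/12 * (2*(m:ℝ)+1)^5 * (((3 * m).choose 2 : ℕ) : ℝ) := by
              push_cast
              nlinarith [mul_le_mul_of_nonneg_right hlt.le
                (show (0:ℝ) ≤ (2*(m:ℝ)+1)^2 * (((3 * m).choose 2 : ℕ) : ℝ) from by positivity)]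
    · have hlt : ((N3 m E V δ p.1).card : ℝ) < δ/12 * (2*(m:ℝ)+1)^3 := by
        simp only [Gset, Finset.mem_filter, Finset.mem_univ, true_and, not_le] at hp1
        exact hp1
      have hcount : (Finset.univ.filter (fun y : (Fin (2*m+1) × Fin (2*m+1) × Fin (2*m+1)) × (Fin (2*m+1) × Fin (2*m+1)) =>
          y.1 ∈ N3 m E V δ p.1)).card ≤
          (N3 m E V δ p.1).card * ((2*m+1) * (2*m+1)) := by
        have hle := Finset.card_le_card_of_injOn
          (s := Finset.univ.filter (fun y : (Fin (2*m+1) × Fin (2*m+1) × Fin (2*m+1)) × (Fin (2*m+1) × Fin (2*m+1)) =>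
            y.1 ∈ N3 m E V δ p.1))
          (f := fun y : (Fin (2*m+1) × Fin (2*m+1) × Fin (2*m+1)) × (Fin (2*m+1) × Fin (2*m+1)) => y)
          (t := (N3 m E V δ p.1) ×ˢ (Finset.univ : Finset (Fin (2*m+1) × Fin (2*m+1))))
          (fun y hy => Finset.mem_product.2 ⟨(Finset.mem_filter.1 hy).2, Finset.mem_univ _⟩)
          (fun x _ y _ hxy => hxy)
        calc _ ≤ _ := hle
          _ = (N3 m E V δ p.1).card * ((2*m+1) * (2*m+1)) := by
            rw [Finset.card_product, Finset.card_univ]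
            simp [Fintype.card_prod, Fintype.card_fin]
      calc (∑ y : (Fin (2*m+1) × Fin (2*m+1) × Fin (2*m+1)) × (Fin (2*m+1) × Fin (2*m+1)),
            (if q3P m E V δ (p, y) then (((3 * m).choose 2 : ℕ) : ℝ) else 0))
          ≤ ∑ y : (Fin (2*m+1) × Fin (2*m+1) × Fin (2*m+1)) × (Fin (2*m+1) × Fin (2*m+1)),
            (if y.1 ∈ N3 m E V δ p.1 then (((3 * m).choose 2 : ℕ) : ℝ) else 0) := by
            refine Finset.sum_le_sum fun y _ => ?_
            by_cases hq : q3P m E V δ (p, y)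
            · rw [if_pos hq, if_pos hq.1]
            · rw [if_neg hq]; split_ifs <;> linarith
        _ = ((Finset.univ.filter (fun y : (Fin (2*m+1) × Fin (2*m+1) × Fin (2*m+1)) × (Fin (2*m+1) × Fin (2*m+1)) =>
              y.1 ∈ N3 m E V δ p.1)).card : ℝ) * (((3 * m).choose 2 : ℕ) : ℝ) := by
            rw [← Finset.sum_filter, Finset.sum_const, nsmul_eq_mul]
        _ ≤ (((N3 m E V δ p.1).card * ((2*m+1) * (2*m+1)) : ℕ) : ℝ) * (((3 * m).choose 2 : ℕ) : ℝ) :=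
            mul_le_mul_of_nonneg_right (Nat.cast_le.2 hcount) hC
        _ ≤ δ/12 * (2*(m:ℝ)+1)^5 * (((3 * m).choose 2 : ℕ) : ℝ) := by
            push_cast
            nlinarith [mul_le_mul_of_nonneg_right hlt.le
              (show (0:ℝ) ≤ (2*(m:ℝ)+1)^2 * (((3 * m).choose 2 : ℕ) : ℝ) from by positivity)]
  calc ∑ p : Fin m × Fin m, (∑ y : (Fin (2*m+1) × Fin (2*m+1) × Fin (2*m+1)) × (Fin (2*m+1) × Fin (2*m+1)),
        (if q3P m E V δ (p, y) then (((3 * m).choose 2 : ℕ) : ℝ) else 0))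
      ≤ ∑ _p : Fin m × Fin m, δ/12 * (2*(m:ℝ)+1)^5 * (((3 * m).choose 2 : ℕ) : ℝ) :=
        Finset.sum_le_sum fun p _ => hinner p
    _ = (Fintype.card (Fin m × Fin m) : ℝ) * (δ/12 * (2*(m:ℝ)+1)^5 * (((3 * m).choose 2 : ℕ) : ℝ)) := by
        rw [Finset.sum_const, Finset.card_univ, nsmul_eq_mul]
    _ = δ/12 * ((m:ℝ)^2 * (2*(m:ℝ)+1)^5) * (((3 * m).choose 2 : ℕ) : ℝ) := by
        simp only [Fintype.card_prod, Fintype.card_fin]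
        push_cast
        ring

end aux

/-- Let `δ ∈ (0,1]` and `m ≥ 36/δ` an integer.  Let `(E,V)` be a partition
datum on `{1,…,3m}` with `δ(E,V) ≥ δ`, and define `N3` and `G` with parameter `δ`.  Then
the sum over all tuples `(i, i', (j₁,j₂,j₃), (j'₁,j'₂))` with `i ∈ G`, `i' ∈ G`,
`(j₁,j₂,j₃) ∈ N3(i)` and `(j₂,j'₁,j'₂) ∈ N3(i')` of
`|E_i[V_{j₁} ∩ V_{j₂} ∩ V_{j₃}] ∩ E_{i'}[V_{j'₁} ∩ V_{j'₂}]| / C(3m,2)` is at least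
`(δ(E,V)/2)·m²·(2m+1)⁵`. -/
theorem stmt11 (δ : ℝ) (hδ0 : 0 < δ) (hδ1 : δ ≤ 1) (m : ℕ) (hm : 36 / δ ≤ (m : ℝ))
    (E : Fin m → Finset (Finset (Fin (3 * m))))
    (hE2 : ∀ i, ∀ e ∈ E i, e.card = 2)
    (V : Fin (2 * m + 1) → Finset (Fin (3 * m)))
    (hdens : δ ≤ density m E V) :
    (density m E V / 2) * (m : ℝ) ^ 2 * (2 * (m : ℝ) + 1) ^ 5 ≤
      ∑ x ∈ (Finset.univ.filter
          (fun x : (Fin m × Fin m) ×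
              (Fin (2 * m + 1) × Fin (2 * m + 1) × Fin (2 * m + 1)) ×
              (Fin (2 * m + 1) × Fin (2 * m + 1)) =>
            x.1.1 ∈ Gset m E V δ ∧ x.1.2 ∈ Gset m E V δ ∧
              x.2.1 ∈ N3 m E V δ x.1.1 ∧
              (x.2.1.2.1, x.2.2.1, x.2.2.2) ∈ N3 m E V δ x.1.2)),
        ((((E x.1.1).filter fun e => e ⊆ V x.2.1.1 ∩ V x.2.1.2.1 ∩ V x.2.1.2.2) ∩
          ((E x.1.2).filter fun e => e ⊆ V x.2.2.1 ∩ V x.2.2.2)).card : ℝ) /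
          ((3 * m).choose 2 : ℝ) := by
  classical
  have hδm : (36:ℝ) ≤ δ * m := by
    rw [div_le_iff₀ hδ0] at hm; linarith [hm]
  have hm36 : (36:ℝ) ≤ (m:ℝ) := by nlinarith
  have hmpos : (0:ℝ) < (m:ℝ) := by linarith
  have hCpos : (0:ℝ) < (((3 * m).choose 2 : ℕ) : ℝ) := by
    have h2 : 0 < (3*m).choose 2 := Nat.choose_pos (by
      have : 36 ≤ m := by exact_mod_cast hm36
      omega)
    exact_mod_cast h2
  have hC : (0:ℝ) ≤ (((3 * m).choose 2 : ℕ) : ℝ) := hCpos.le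
  rw [← Finset.sum_div, le_div_iff₀ hCpos]
  have hne : ((m:ℝ)^2*(2*(m:ℝ)+1)^5*(((3 * m).choose 2 : ℕ) : ℝ)) ≠ 0 :=
    ne_of_gt (mul_pos (mul_pos (pow_pos hmpos 2) (by positivity)) hCpos)
  have htot := sum_univ_Tc m E V hne
  have hsplit := Finset.sum_filter_add_sum_filter_not Finset.univ (goodP m E V δ) (Tc m E V)
  have hdC : (0:ℝ) ≤ δ/3 * (((3 * m).choose 2 : ℕ) : ℝ) := mul_nonneg (by linarith) hC
  -- S2 real bound
  have h72 : (72:ℝ) ≤ δ*(2*(m:ℝ)+1) := by nlinarith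
  have hq2R : ((Finset.univ.filter (q2P m)).card : ℝ) * (((3 * m).choose 2 : ℕ) : ℝ) ≤
      δ/12 * ((m:ℝ)^2*(2*(m:ℝ)+1)^5) * (((3 * m).choose 2 : ℕ) : ℝ) := by
    have hstep := mul_le_mul_of_nonneg_right (S2_count m) hC
    have hkey := mul_le_mul_of_nonneg_right
      (show (6:ℝ) ≤ δ/12*(2*(m:ℝ)+1) by linarith)
      (show (0:ℝ) ≤ (m:ℝ)^2*(2*(m:ℝ)+1)^4*(((3 * m).choose 2 : ℕ) : ℝ) by positivity)
    nlinarith [hstep, hkey]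
  -- bad sum bound
  have hbadsum : ∑ x ∈ Finset.univ.filter (fun x => ¬ goodP m E V δ x), Tc m E V x ≤
      δ/2 * ((m:ℝ)^2*(2*(m:ℝ)+1)^5*(((3 * m).choose 2 : ℕ) : ℝ)) := by
    calc ∑ x ∈ Finset.univ.filter (fun x => ¬ goodP m E V δ x), Tc m E V x
        ≤ ∑ x ∈ Finset.univ.filter (fun x => ¬ goodP m E V δ x),
            ((if q1P m E V δ x then δ/3 * (((3 * m).choose 2 : ℕ) : ℝ) else 0) +
             (if q2P m x then (((3 * m).choose 2 : ℕ) : ℝ) else 0) +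
             (if q3P m E V δ x then (((3 * m).choose 2 : ℕ) : ℝ) else 0)) :=
          Finset.sum_le_sum (fun x hx =>
            pointwise_bound m E V δ hδ0 hE2 x (Finset.mem_filter.1 hx).2)
      _ ≤ ∑ x : TUP m,
            ((if q1P m E V δ x then δ/3 * (((3 * m).choose 2 : ℕ) : ℝ) else 0) +
             (if q2P m x then (((3 * m).choose 2 : ℕ) : ℝ) else 0) +
             (if q3P m E V δ x then (((3 * m).choose 2 : ℕ) : ℝ) else 0)) :=
          Finset.sum_le_sum_of_subset_of_nonneg (Finset.filter_subset _ _)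
            (fun x _ _ => by
              have h1 : (0:ℝ) ≤ (if q1P m E V δ x then δ/3 * (((3 * m).choose 2 : ℕ) : ℝ) else 0) := by
                split_ifs <;> linarith
              have h2 : (0:ℝ) ≤ (if q2P m x then (((3 * m).choose 2 : ℕ) : ℝ) else 0) := by
                split_ifs <;> linarith
              have h3 : (0:ℝ) ≤ (if q3P m E V δ x then (((3 * m).choose 2 : ℕ) : ℝ) else 0) := by
                split_ifs <;> linarith
              linarith)
      _ = (∑ x : TUP m, (if q1P m E V δ x then δ/3 * (((3 * m).choose 2 : ℕ) : ℝ) else 0)) +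
          (∑ x : TUP m, (if q2P m x then (((3 * m).choose 2 : ℕ) : ℝ) else 0)) +
          (∑ x : TUP m, (if q3P m E V δ x then (((3 * m).choose 2 : ℕ) : ℝ) else 0)) := by
          rw [← Finset.sum_add_distrib, ← Finset.sum_add_distrib]
      _ ≤ δ/3 * ((m:ℝ)^2*(2*(m:ℝ)+1)^5) * (((3 * m).choose 2 : ℕ) : ℝ) +
          δ/12 * ((m:ℝ)^2*(2*(m:ℝ)+1)^5) * (((3 * m).choose 2 : ℕ) : ℝ) +
          δ/12 * ((m:ℝ)^2*(2*(m:ℝ)+1)^5) * (((3 * m).choose 2 : ℕ) : ℝ) := by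
          refine add_le_add (add_le_add (S1_bound m E V δ hδ0) ?_) (S3_bound m E V δ hδ0)
          calc (∑ x : TUP m, (if q2P m x then (((3 * m).choose 2 : ℕ) : ℝ) else 0))
              = ((Finset.univ.filter (q2P m)).card : ℝ) * (((3 * m).choose 2 : ℕ) : ℝ) := by
                rw [← Finset.sum_filter, Finset.sum_const, nsmul_eq_mul]
            _ ≤ _ := hq2R
      _ = δ/2 * ((m:ℝ)^2*(2*(m:ℝ)+1)^5*(((3 * m).choose 2 : ℕ) : ℝ)) := by ring
  have hMC : (0:ℝ) ≤ (m:ℝ)^2*(2*(m:ℝ)+1)^5*(((3 * m).choose 2 : ℕ) : ℝ) := by positivity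
  have hfinal : density m E V / 2 * (m:ℝ)^2 * (2*(m:ℝ)+1)^5 * (((3 * m).choose 2 : ℕ) : ℝ) ≤
      ∑ x ∈ Finset.univ.filter (goodP m E V δ), Tc m E V x := by
    nlinarith [hsplit, htot, hbadsum, mul_nonneg (sub_nonneg.2 hdens) hMC]
  refine le_trans hfinal (le_of_eq (Finset.sum_congr ?_ ?_))
  · ext x
    simp only [Finset.mem_filter, goodP]
  · intro x _
    rfl
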